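/- For all positive integers m and k, Σ_{j=1−k}^{k} (−1)^j · C(j, m) · binom(2k−1, k−j) = (−1)^m · ( C(2k−m−2, k−m) − C(2k−m−2, k−2) ), where on the right C(x, r) is the generalized binomial coefficient with integer top x (possibly negative) and integer bottom r, equal to x(x−1)⋯(x−r+1)/r! for r ≥ 0 and equal to 0 for r < 0. In particular the right-hand side vanishes when k > m (i.e., the first term cancels the second), and when k < m the first term C(2k−m−2, k−m) is 0. -/

import Mathlib

/-- The generalized binomial coefficient `C(x, m) = x(x−1)⋯(x−m+1)/m!` for an
integer `x` (possibly negative or less than `m`) and a natural number `m`. -/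
def genChoose (x : ℤ) (m : ℕ) : ℚ :=
  (∏ i ∈ Finset.range m, ((x : ℚ) - i)) / Nat.factorial m

/-- The generalized binomial coefficient `C(x, r)` with integer top `x`
(possibly negative) and integer bottom `r`: equal to `x(x−1)⋯(x−r+1)/r!`
for `r ≥ 0`, and equal to `0` for `r < 0`. -/
def genChooseZ (x r : ℤ) : ℚ :=
  if r < 0 then 0
  else (∏ i ∈ Finset.range r.toNat, ((x : ℚ) - i)) / Nat.factorial r.toNat

lemma genChoose_zero (x : ℤ) : genChoose x 0 = 1 := by simp [genChoose]

lemma genChooseZ_ofNat (x : ℤ) (r : ℕ) : genChooseZ x (r : ℤ) = genChoose x r := by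
  simp [genChooseZ, genChoose]

lemma genChooseZ_neg (x r : ℤ) (h : r < 0) : genChooseZ x r = 0 := if_pos h

lemma genChoose_pascal (x : ℤ) (m : ℕ) :
    genChoose (x + 1) (m + 1) = genChoose x (m + 1) + genChoose x m := by
  unfold genChoose
  rw [Finset.prod_range_succ' (fun i : ℕ => (((x + 1 : ℤ)) : ℚ) - i),
    Finset.prod_range_succ (fun i : ℕ => ((x : ℚ) - i))]
  have hc : ∀ i ∈ Finset.range m,
      (((x + 1 : ℤ)) : ℚ) - ((i + 1 : ℕ) : ℚ) = (x : ℚ) - i := by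
    intro i _; push_cast; ring
  rw [Finset.prod_congr rfl hc]
  have hm : (Nat.factorial m : ℚ) ≠ 0 := by exact_mod_cast Nat.factorial_ne_zero m
  have hm1 : (Nat.factorial (m + 1) : ℚ) ≠ 0 := by
    exact_mod_cast Nat.factorial_ne_zero (m + 1)
  rw [Nat.factorial_succ] at hm1 ⊢
  push_cast at hm1 ⊢
  field_simp
  ring

lemma genChooseZ_pascal (x r : ℤ) :
    genChooseZ (x + 1) r = genChooseZ x r + genChooseZ x (r - 1) := by
  rcases lt_trichotomy r 0 with h | h | h
  · rw [genChooseZ_neg _ _ h, genChooseZ_neg _ _ h, genChooseZ_neg _ _ (by omega), add_zero]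
  · subst h
    rw [genChooseZ_neg _ _ (by norm_num : (0 : ℤ) - 1 < 0)]
    simp [genChooseZ]
  · obtain ⟨s, rfl⟩ : ∃ s : ℕ, r = (s : ℤ) + 1 := ⟨(r - 1).toNat, by omega⟩
    have h1 : (s : ℤ) + 1 = ((s + 1 : ℕ) : ℤ) := by push_cast; ring
    have h2 : ((s + 1 : ℕ) : ℤ) - 1 = ((s : ℕ) : ℤ) := by push_cast; ring
    rw [h1, h2, genChooseZ_ofNat, genChooseZ_ofNat, genChooseZ_ofNat, genChoose_pascal]

lemma sumA (n : ℕ) (c : ℤ) : ∀ m : ℤ,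
    ∑ i ∈ Finset.range (n + 1), (-1 : ℚ) ^ i * (n.choose i) * genChooseZ (c + i) m
      = (-1 : ℚ) ^ n * genChooseZ c (m - n) := by
  induction n with
  | zero => intro m; simp
  | succ n ih =>
    intro m
    have key : ∀ i ∈ Finset.range (n + 1),
        (-1 : ℚ) ^ (i + 1) * ((n + 1).choose (i + 1)) * genChooseZ (c + ((i + 1 : ℕ) : ℤ)) m
        = -((-1 : ℚ) ^ i * (n.choose i) *
              (genChooseZ (c + i) m + genChooseZ (c + i) (m - 1)))
          + (-1 : ℚ) ^ (i + 1) * (n.choose (i + 1)) * genChooseZ (c + ((i + 1 : ℕ) : ℤ)) m := by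
      intro i _
      have hp : genChooseZ (c + ((i + 1 : ℕ) : ℤ)) m
          = genChooseZ (c + i) m + genChooseZ (c + i) (m - 1) := by
        have h := genChooseZ_pascal (c + i) m
        have he : c + ((i + 1 : ℕ) : ℤ) = c + i + 1 := by push_cast; ring
        rw [he, h]
      rw [Nat.choose_succ_succ, hp]
      push_cast
      ring
    rw [Finset.sum_range_succ' (fun i : ℕ =>
      (-1 : ℚ) ^ i * ((n + 1).choose i : ℚ) * genChooseZ (c + i) m) (n + 1)]
    rw [Finset.sum_congr rfl key, Finset.sum_add_distrib]
    have e1 : ∑ i ∈ Finset.range (n + 1),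
        -((-1 : ℚ) ^ i * (n.choose i) *
            (genChooseZ (c + i) m + genChooseZ (c + i) (m - 1)))
        = -((-1 : ℚ) ^ n * genChooseZ c (m - n)) -
            (-1 : ℚ) ^ n * genChooseZ c (m - 1 - n) := by
      have hsplit : ∀ i ∈ Finset.range (n + 1),
          -((-1 : ℚ) ^ i * (n.choose i) *
              (genChooseZ (c + i) m + genChooseZ (c + i) (m - 1)))
          = -((-1 : ℚ) ^ i * (n.choose i) * genChooseZ (c + i) m) +
            -((-1 : ℚ) ^ i * (n.choose i) * genChooseZ (c + i) (m - 1)) := by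
        intro i _; ring
      rw [Finset.sum_congr rfl hsplit, Finset.sum_add_distrib, Finset.sum_neg_distrib,
        Finset.sum_neg_distrib, ih m, ih (m - 1)]
      ring
    set g : ℕ → ℚ := fun j => (-1 : ℚ) ^ j * (n.choose j : ℚ) * genChooseZ (c + j) m with hg
    have W1 := Finset.sum_range_succ' g (n + 1)
    have W2 := Finset.sum_range_succ g (n + 1)
    have hgtop : g (n + 1) = 0 := by
      simp [hg, Nat.choose_succ_self]
    have hg0 : g 0 = genChooseZ c m := by simp [hg]
    have h2 : ∑ i ∈ Finset.range (n + 1),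
        (-1 : ℚ) ^ (i + 1) * (n.choose (i + 1) : ℚ) * genChooseZ (c + ((i + 1 : ℕ) : ℤ)) m
        = (-1 : ℚ) ^ n * genChooseZ c (m - n) - genChooseZ c m := by
      have : ∑ i ∈ Finset.range (n + 1), g (i + 1)
          = (-1 : ℚ) ^ n * genChooseZ c (m - n) - genChooseZ c m := by
        have := W1.symm.trans W2
        rw [hgtop, add_zero, hg0, ih m] at this
        linarith [this]
      simpa [hg] using this
    rw [e1, h2]
    have harg : m - 1 - (n : ℤ) = m - ((n + 1 : ℕ) : ℤ) := by push_cast; ring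
    rw [harg]
    simp only [pow_zero, Nat.choose_zero_right, Nat.cast_one, one_mul, Nat.cast_zero, add_zero]
    ring

lemma genChoose_neg_top (x : ℤ) (m : ℕ) :
    genChoose ((m : ℤ) - 1 - x) m = (-1 : ℚ) ^ m * genChoose x m := by
  unfold genChoose
  rw [← Finset.prod_range_reflect (fun i : ℕ => ((((m : ℤ) - 1 - x : ℤ)) : ℚ) - i) m]
  have hc : ∀ i ∈ Finset.range m,
      ((((m : ℤ) - 1 - x : ℤ)) : ℚ) - ((m - 1 - i : ℕ) : ℚ) = -((x : ℚ) - i) := by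
    intro i hi
    rw [Finset.mem_range] at hi
    have h1 : ((m - 1 - i : ℕ) : ℚ) = (m : ℚ) - 1 - i := by
      have : m - 1 - i = m - (1 + i) := by omega
      rw [this, Nat.cast_sub (by omega)]
      push_cast; ring
    rw [h1]; push_cast; ring
  rw [Finset.prod_congr rfl hc]
  have : ∀ i ∈ Finset.range m, -((x : ℚ) - i) = (-1) * ((x : ℚ) - i) := by
    intro i _; ring
  rw [Finset.prod_congr rfl this, Finset.prod_mul_distrib, Finset.prod_const,
    Finset.card_range]
  ring

lemma genChoose_natCast (n r : ℕ) : genChoose (n : ℤ) r = (n.choose r : ℚ) := by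
  have hprod : (∏ i ∈ Finset.range r, ((((n : ℤ)) : ℚ) - (i : ℚ)))
      = (n.descFactorial r : ℚ) := by
    rcases le_or_gt r n with h | h
    · rw [Nat.descFactorial_eq_prod_range, Nat.cast_prod]
      refine Finset.prod_congr rfl fun i hi => ?_
      rw [Finset.mem_range] at hi
      rw [Nat.cast_sub (by omega)]
      norm_num
    · rw [Finset.prod_eq_zero (Finset.mem_range.mpr h)
        (by norm_num : (((n : ℤ)) : ℚ) - ((n : ℕ) : ℚ) = 0)]
      rw [Nat.descFactorial_eq_zero_iff_lt.mpr h, Nat.cast_zero]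
  unfold genChoose
  rw [hprod, Nat.descFactorial_eq_factorial_mul_choose]
  have : (Nat.factorial r : ℚ) ≠ 0 := by exact_mod_cast Nat.factorial_ne_zero r
  push_cast
  field_simp

lemma genChooseZ_natCast (n r : ℕ) : genChooseZ (n : ℤ) (r : ℤ) = (n.choose r : ℚ) := by
  rw [genChooseZ_ofNat, genChoose_natCast]

lemma final_id (m k : ℕ) (hm : 0 < m) (hk : 0 < k) :
    genChooseZ (2 * (k : ℤ) - m - 2) ((k : ℤ) - m) -
      genChooseZ (2 * (k : ℤ) - m - 2) ((k : ℤ) - 2)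
    = (-1 : ℚ) ^ (k + 1) * genChooseZ ((m : ℤ) - k - 1) ((m : ℤ) - 2 * k + 1) := by
  rcases le_or_gt (2 * k) (m + 1) with hA | hB
  · -- m ≥ 2k - 1
    rcases Nat.lt_or_ge k 2 with hk1 | hk2
    · -- k = 1
      rcases Nat.lt_or_ge m 2 with hm1 | hm2
      · -- m = 1, k = 1
        rw [genChooseZ_neg _ _ (by omega : (k : ℤ) - 2 < 0)]
        have e1 : 2 * (k : ℤ) - m - 2 = (m : ℤ) - k - 1 := by omega
        have e2 : (k : ℤ) - m = (m : ℤ) - 2 * k + 1 := by omega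
        rw [e1, e2]
        have e3 : (-1 : ℚ) ^ (k + 1) = 1 := by
          obtain rfl : k = 1 := by omega
          norm_num
        rw [e3]
        ring
      · -- m ≥ 2, k = 1
        rw [genChooseZ_neg _ _ (by omega : (k : ℤ) - m < 0),
          genChooseZ_neg _ _ (by omega : (k : ℤ) - 2 < 0)]
        have e1 : (m : ℤ) - k - 1 = ((m - 2 : ℕ) : ℤ) := by omega
        have e2 : (m : ℤ) - 2 * k + 1 = ((m - 1 : ℕ) : ℤ) := by omega
        rw [e1, e2, genChooseZ_natCast, Nat.choose_eq_zero_of_lt (by omega)]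
        norm_num
    · -- k ≥ 2
      obtain ⟨k2, rfl⟩ : ∃ k2, k = k2 + 2 := ⟨k - 2, by omega⟩
      rw [genChooseZ_neg _ _ (by omega : ((k2 + 2 : ℕ) : ℤ) - m < 0)]
      have e2 : ((k2 + 2 : ℕ) : ℤ) - 2 = ((k2 : ℕ) : ℤ) := by omega
      rw [e2, genChooseZ_ofNat]
      have e3 : 2 * ((k2 + 2 : ℕ) : ℤ) - m - 2
          = ((k2 : ℕ) : ℤ) - 1 - ((m : ℤ) - ((k2 : ℤ) + 2) - 1) := by
        push_cast; ring
      rw [e3, genChoose_neg_top]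
      have e4 : (m : ℤ) - ((k2 : ℤ) + 2) - 1 = ((m - k2 - 3 : ℕ) : ℤ) := by omega
      have e5 : (m : ℤ) - 2 * ((k2 + 2 : ℕ) : ℤ) + 1 = ((m - 2 * k2 - 3 : ℕ) : ℤ) := by omega
      have e6 : (m : ℤ) - ((k2 + 2 : ℕ) : ℤ) - 1 = ((m - k2 - 3 : ℕ) : ℤ) := by omega
      rw [e4, e5, e6, genChoose_natCast, genChooseZ_natCast]
      have hsymm : (m - k2 - 3).choose k2 = (m - k2 - 3).choose (m - 2 * k2 - 3) := by
        have := Nat.choose_symm (by omega : k2 ≤ m - k2 - 3)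
        rw [← this]
        congr 1
        omega
      rw [hsymm]
      ring
  · -- m + 1 < 2k, RHS = 0
    rw [genChooseZ_neg _ _ (by omega : (m : ℤ) - 2 * k + 1 < 0)]
    rw [mul_zero]
    rcases lt_trichotomy m k with hmk | hmk | hmk
    · -- m < k, so k ≥ 2
      have hk2 : 2 ≤ k := by omega
      have e1 : 2 * (k : ℤ) - m - 2 = ((2 * k - m - 2 : ℕ) : ℤ) := by omega
      have e2 : (k : ℤ) - m = ((k - m : ℕ) : ℤ) := by omega
      have e3 : (k : ℤ) - 2 = ((k - 2 : ℕ) : ℤ) := by omega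
      rw [e1, e2, e3, genChooseZ_natCast, genChooseZ_natCast]
      have hsymm : (2 * k - m - 2).choose (k - m) = (2 * k - m - 2).choose (k - 2) := by
        have := Nat.choose_symm (by omega : k - m ≤ 2 * k - m - 2)
        rw [← this]
        congr 1
        omega
      rw [hsymm]
      ring
    · -- m = k
      subst hmk
      have hk2 : 2 ≤ m := by omega
      have e1 : 2 * (m : ℤ) - m - 2 = ((m - 2 : ℕ) : ℤ) := by omega
      have e2 : (m : ℤ) - m = ((0 : ℕ) : ℤ) := by omega
      have e3 : (m : ℤ) - 2 = ((m - 2 : ℕ) : ℤ) := by omega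
      rw [e1, e2, e3, genChooseZ_natCast, genChooseZ_natCast, Nat.choose_self,
        Nat.choose_zero_right]
      norm_num
    · -- k < m
      rw [genChooseZ_neg _ _ (by omega : (k : ℤ) - m < 0)]
      have hk3 : 3 ≤ k := by omega
      have e1 : 2 * (k : ℤ) - m - 2 = ((2 * k - m - 2 : ℕ) : ℤ) := by omega
      have e3 : (k : ℤ) - 2 = ((k - 2 : ℕ) : ℤ) := by omega
      rw [e1, e3, genChooseZ_natCast, Nat.choose_eq_zero_of_lt (by omega)]
      norm_num

/-- For all positive integers `m`, `k`:
`∑_{j=1−k}^{k} (−1)^j ⬝ C(j, m) ⬝ binom(2k−1, k−j)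
  = (−1)^m ⬝ (C(2k−m−2, k−m) − C(2k−m−2, k−2))`. -/
theorem inner_sum_eval (m k : ℕ) (hm : 0 < m) (hk : 0 < k) :
    ∑ j ∈ Finset.Icc (1 - (k : ℤ)) (k : ℤ),
      ((j.negOnePow : ℤ) : ℚ) * genChoose j m *
        (Nat.choose (2 * k - 1) ((k : ℤ) - j).toNat : ℚ)
    = (-1 : ℚ) ^ m *
        (genChooseZ (2 * (k : ℤ) - m - 2) ((k : ℤ) - m) -
         genChooseZ (2 * (k : ℤ) - m - 2) ((k : ℤ) - 2)) := by
  have hset : Finset.Icc (1 - (k : ℤ)) (k : ℤ)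
      = (Finset.range (2 * k)).map
          ⟨fun i : ℕ => (k : ℤ) - i, by have hinj : Function.Injective (fun i : ℕ => (k : ℤ) - i) := (by intro a b h; simp only at h; omega); exact hinj⟩ := by
    ext j
    simp only [Finset.mem_Icc, Finset.mem_map, Finset.mem_range,
      Function.Embedding.coeFn_mk]
    constructor
    · rintro ⟨h1, h2⟩
      exact ⟨((k : ℤ) - j).toNat, by omega, by omega⟩
    · rintro ⟨i, hi, rfl⟩
      omega
  rw [hset, Finset.sum_map]
  simp only [Function.Embedding.coeFn_mk]
  have hterm : ∀ i ∈ Finset.range (2 * k),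
      ((((k : ℤ) - i).negOnePow : ℤ) : ℚ) * genChoose ((k : ℤ) - i) m *
        (Nat.choose (2 * k - 1) ((k : ℤ) - ((k : ℤ) - i)).toNat : ℚ)
      = (-1 : ℚ) ^ (k + m) *
          ((-1 : ℚ) ^ i * ((2 * k - 1).choose i : ℚ) *
            genChooseZ (((m : ℤ) - k - 1) + i) (m : ℤ)) := by
    intro i hi
    have htn : ((k : ℤ) - ((k : ℤ) - i)).toNat = i := by omega
    have hn : ((((k : ℤ) - i).negOnePow : ℤ) : ℚ) = (-1 : ℚ) ^ k * (-1 : ℚ) ^ i := by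
      rw [show (k : ℤ) - i = (k : ℤ) + (-(i : ℤ)) from by ring, Int.negOnePow_add,
        Int.negOnePow_neg]
      push_cast
      rw [Int.cast_negOnePow_natCast ℚ, Int.cast_negOnePow_natCast ℚ]
    have hg : genChoose ((k : ℤ) - i) m
        = (-1 : ℚ) ^ m * genChooseZ (((m : ℤ) - k - 1) + i) (m : ℤ) := by
      have h := genChoose_neg_top ((m : ℤ) - 1 - ((k : ℤ) - i)) m
      rw [show (m : ℤ) - 1 - ((m : ℤ) - 1 - ((k : ℤ) - i)) = (k : ℤ) - i from by ring] at h
      rw [h, genChooseZ_ofNat]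
      congr 2
      ring
    rw [htn, hn, hg]
    ring
  rw [Finset.sum_congr rfl hterm, ← Finset.mul_sum]
  have hS := sumA (2 * k - 1) ((m : ℤ) - k - 1) (m : ℤ)
  rw [show 2 * k - 1 + 1 = 2 * k from by omega] at hS
  rw [hS, final_id m k hm hk]
  have harg : (m : ℤ) - ((2 * k - 1 : ℕ) : ℤ) = (m : ℤ) - 2 * k + 1 := by omega
  rw [harg]
  have hodd : (-1 : ℚ) ^ (2 * k - 1) = -1 :=
    Odd.neg_one_pow ⟨k - 1, by omega⟩
  rw [hodd]
  ring
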